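/- With 𝔛_∞ = ⋃_{n≥0} 𝔛_n the set of Rota-Baxter words over X, the four union components of 𝔛_∞ = Λ(X, 𝔛_∞) are pairwise disjoint; equivalently, 𝔛_∞ is the disjoint union of (⋃_{r≥1} (X⌊𝔛_∞⌋)^r), (⋃_{r≥0} (X⌊𝔛_∞⌋)^r X), (⋃_{r≥1} (⌊𝔛_∞⌋X)^r), and (⋃_{r≥0} (⌊𝔛_∞⌋X)^r ⌊𝔛_∞⌋). -/

import Mathlib

/-! Rota-Baxter words over an alphabet `X`, with two bracket symbols. The
alphabet is `X ⊕ Bool`, where `Sum.inr false` is the opening bracket `⌊` and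
`Sum.inr true` is the closing bracket `⌋`. Words are lists; sets of words are
combined by concatenation. -/

/-- The opening bracket `⌊`. -/
def lb {X : Type*} : X ⊕ Bool := Sum.inr false

/-- The closing bracket `⌋`. -/
def rb {X : Type*} : X ⊕ Bool := Sum.inr true

/-- The one-letter word given by `x ∈ X`. -/
def letter {X : Type*} (x : X) : List (X ⊕ Bool) := [Sum.inl x]

/-- The bracketed word `⌊w⌋`. -/
def bracket {X : Type*} (w : List (X ⊕ Bool)) : List (X ⊕ Bool) := lb :: (w ++ [rb])

/-- Concatenation of two sets of words. -/
def catS {X : Type*} (Y Z : Set (List (X ⊕ Bool))) : Set (List (X ⊕ Bool)) :=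
  {w | ∃ y ∈ Y, ∃ z ∈ Z, w = y ++ z}

/-- The set `⌊Z⌋`. -/
def brS {X : Type*} (Z : Set (List (X ⊕ Bool))) : Set (List (X ⊕ Bool)) := bracket '' Z

/-- `powS Y n` is the `(n+1)`-fold concatenation power `Y^{n+1}`. -/
def powS {X : Type*} (Y : Set (List (X ⊕ Bool))) : ℕ → Set (List (X ⊕ Bool))
  | 0 => Y
  | n + 1 => catS Y (powS Y n)

/-- The set of one-letter words, identified with `X`. -/
def lettersS (X : Type*) : Set (List (X ⊕ Bool)) := Set.range letter

/-- The alternating product `Λ(Y, Z)`: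
`(⋃_{r≥1} (Y⌊Z⌋)^r) ∪ (⋃_{r≥0} (Y⌊Z⌋)^r Y) ∪ (⋃_{r≥1} (⌊Z⌋Y)^r) ∪ (⋃_{r≥0} (⌊Z⌋Y)^r ⌊Z⌋)`. -/
def altS {X : Type*} (Y Z : Set (List (X ⊕ Bool))) : Set (List (X ⊕ Bool)) :=
  (⋃ n, powS (catS Y (brS Z)) n) ∪ (Y ∪ ⋃ n, catS (powS (catS Y (brS Z)) n) Y) ∪
  (⋃ n, powS (catS (brS Z) Y) n) ∪ (brS Z ∪ ⋃ n, catS (powS (catS (brS Z) Y) n) (brS Z))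

/-- `𝔛₀ = X`, `𝔛_{n+1} = Λ(X, 𝔛_n)`. -/
def frakX (X : Type*) : ℕ → Set (List (X ⊕ Bool))
  | 0 => lettersS X
  | n + 1 => altS (lettersS X) (frakX X n)

/-- `𝔛_∞ = ⋃_n 𝔛_n`, the set of Rota-Baxter words over `X`. -/
def frakXinf (X : Type*) : Set (List (X ⊕ Bool)) := ⋃ n, frakX X n

section Aux

variable {X : Type*}

lemma catS_mono {Y Y' Z Z' : Set (List (X ⊕ Bool))} (hY : Y ⊆ Y') (hZ : Z ⊆ Z') :
    catS Y Z ⊆ catS Y' Z' := by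
  rintro w ⟨y, hy, z, hz, rfl⟩
  exact ⟨y, hY hy, z, hZ hz, rfl⟩

lemma brS_mono {Z Z' : Set (List (X ⊕ Bool))} (h : Z ⊆ Z') : brS Z ⊆ brS Z' :=
  Set.image_mono h

lemma powS_mono {Y Y' : Set (List (X ⊕ Bool))} (h : Y ⊆ Y') :
    ∀ n, powS Y n ⊆ powS Y' n
  | 0 => h
  | n + 1 => catS_mono h (powS_mono h n)

lemma altS_mono_right {Y Z Z' : Set (List (X ⊕ Bool))} (h : Z ⊆ Z') :
    altS Y Z ⊆ altS Y Z' := by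
  have hb : brS Z ⊆ brS Z' := brS_mono h
  refine Set.union_subset_union (Set.union_subset_union (Set.union_subset_union ?_ ?_) ?_) ?_
  · exact Set.iUnion_mono fun n => powS_mono (catS_mono subset_rfl hb) n
  · exact Set.union_subset_union subset_rfl
      (Set.iUnion_mono fun n => catS_mono (powS_mono (catS_mono subset_rfl hb) n) subset_rfl)
  · exact Set.iUnion_mono fun n => powS_mono (catS_mono hb subset_rfl) n
  · exact Set.union_subset_union hb
      (Set.iUnion_mono fun n => catS_mono (powS_mono (catS_mono hb subset_rfl) n) hb)

lemma mem_altS_of_mem_Y {Y Z : Set (List (X ⊕ Bool))} {w} (hw : w ∈ Y) : w ∈ altS Y Z :=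
  Or.inl (Or.inl (Or.inr (Or.inl hw)))

lemma frakX_le_succ (X : Type*) : ∀ n, frakX X n ⊆ frakX X (n + 1)
  | 0 => fun _ hw => mem_altS_of_mem_Y hw
  | n + 1 => altS_mono_right (frakX_le_succ X n)

lemma frakX_mono (X : Type*) : Monotone (frakX X) :=
  monotone_nat_of_le_succ (frakX_le_succ X)

lemma frakX_subset_inf (X : Type*) (n : ℕ) : frakX X n ⊆ frakXinf X :=
  Set.subset_iUnion (frakX X) n

lemma powS_iUnion_subset {S : ℕ → Set (List (X ⊕ Bool))} (hS : Monotone S) :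
    ∀ m, powS (⋃ n, S n) m ⊆ ⋃ n, powS (S n) m
  | 0 => subset_rfl
  | m + 1 => by
    rintro w ⟨y, hy, z, hz, rfl⟩
    obtain ⟨a, ha⟩ := Set.mem_iUnion.1 hy
    obtain ⟨b, hb⟩ := Set.mem_iUnion.1 (powS_iUnion_subset hS m hz)
    exact Set.mem_iUnion.2 ⟨max a b, y, hS (le_max_left a b) ha, z,
      powS_mono (hS (le_max_right a b)) m hb, rfl⟩

lemma brS_iUnion (S : ℕ → Set (List (X ⊕ Bool))) : brS (⋃ n, S n) = ⋃ n, brS (S n) :=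
  Set.image_iUnion

lemma catS_iUnion_right (Y : Set (List (X ⊕ Bool))) (S : ℕ → Set (List (X ⊕ Bool))) :
    catS Y (⋃ n, S n) ⊆ ⋃ n, catS Y (S n) := by
  rintro w ⟨y, hy, z, hz, rfl⟩
  obtain ⟨n, hn⟩ := Set.mem_iUnion.1 hz
  exact Set.mem_iUnion.2 ⟨n, y, hy, z, hn, rfl⟩

lemma catS_iUnion_left (S : ℕ → Set (List (X ⊕ Bool))) (Y : Set (List (X ⊕ Bool))) :
    catS (⋃ n, S n) Y ⊆ ⋃ n, catS (S n) Y := by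
  rintro w ⟨y, hy, z, hz, rfl⟩
  obtain ⟨n, hn⟩ := Set.mem_iUnion.1 hy
  exact Set.mem_iUnion.2 ⟨n, y, hn, z, hz, rfl⟩

/-- The fixed point equation: `𝔛_∞ = Λ(X, 𝔛_∞)`. -/
lemma frakXinf_eq_altS (X : Type*) : frakXinf X = altS (lettersS X) (frakXinf X) := by
  set L := lettersS X
  have hCmono : Monotone fun n => catS L (brS (frakX X n)) :=
    fun a b hab => catS_mono subset_rfl (brS_mono (frakX_mono X hab))
  have hDmono : Monotone fun n => catS (brS (frakX X n)) L :=
    fun a b hab => catS_mono (brS_mono (frakX_mono X hab)) subset_rfl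
  have hCsub : catS L (brS (frakXinf X)) ⊆ ⋃ n, catS L (brS (frakX X n)) := by
    refine subset_trans ?_ (catS_iUnion_right L _)
    rw [frakXinf, brS_iUnion]
  have hDsub : catS (brS (frakXinf X)) L ⊆ ⋃ n, catS (brS (frakX X n)) L := by
    refine subset_trans ?_ (catS_iUnion_left _ L)
    rw [frakXinf, brS_iUnion]
  apply Set.Subset.antisymm
  · -- 𝔛_∞ ⊆ Λ(X, 𝔛_∞)
    refine Set.iUnion_subset fun n => ?_
    induction n with
    | zero => exact fun w hw => mem_altS_of_mem_Y hw
    | succ n _ =>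
      show altS L (frakX X n) ⊆ _
      exact altS_mono_right (frakX_subset_inf X n)
  · -- Λ(X, 𝔛_∞) ⊆ 𝔛_∞
    have key : ∀ n, altS L (frakX X n) ⊆ frakXinf X := fun n =>
      subset_trans (subset_rfl : altS L (frakX X n) ⊆ frakX X (n + 1))
        (frakX_subset_inf X (n + 1))
    refine Set.union_subset (Set.union_subset (Set.union_subset ?_ ?_) ?_) ?_
    · refine Set.iUnion_subset fun m => ?_
      refine subset_trans (powS_mono hCsub m) ?_
      refine subset_trans (powS_iUnion_subset hCmono m) ?_
      refine Set.iUnion_subset fun n => ?_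
      refine subset_trans ?_ (key n)
      exact fun w hw => Or.inl (Or.inl (Or.inl (Set.mem_iUnion.2 ⟨m, hw⟩)))
    · refine Set.union_subset ?_ ?_
      · exact frakX_subset_inf X 0
      · refine Set.iUnion_subset fun m => ?_
        refine subset_trans (catS_mono (powS_mono hCsub m) subset_rfl) ?_
        refine subset_trans (catS_mono (powS_iUnion_subset hCmono m) subset_rfl) ?_
        refine subset_trans (catS_iUnion_left _ L) ?_
        refine Set.iUnion_subset fun n => ?_
        refine subset_trans ?_ (key n)
        exact fun w hw => Or.inl (Or.inl (Or.inr (Or.inr (Set.mem_iUnion.2 ⟨m, hw⟩))))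
    · refine Set.iUnion_subset fun m => ?_
      refine subset_trans (powS_mono hDsub m) ?_
      refine subset_trans (powS_iUnion_subset hDmono m) ?_
      refine Set.iUnion_subset fun n => ?_
      refine subset_trans ?_ (key n)
      exact fun w hw => Or.inl (Or.inr (Set.mem_iUnion.2 ⟨m, hw⟩))
    · refine Set.union_subset ?_ ?_
      · rw [frakXinf, brS_iUnion]
        refine Set.iUnion_subset fun n => ?_
        refine subset_trans ?_ (key n)
        exact fun w hw => Or.inr (Or.inl hw)
      · refine Set.iUnion_subset fun m => ?_
        rintro w ⟨y, hy, z, hz, rfl⟩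
        obtain ⟨a, ha⟩ := Set.mem_iUnion.1 (powS_iUnion_subset hDmono m (powS_mono hDsub m hy))
        rw [frakXinf, brS_iUnion] at hz
        obtain ⟨b, hb⟩ := Set.mem_iUnion.1 hz
        set c := max a b
        refine key c (Or.inr (Or.inr (Set.mem_iUnion.2 ⟨m, y,
          powS_mono (hDmono (le_max_left a b)) m ha, z,
          brS_mono (frakX_mono X (le_max_right a b)) hb, rfl⟩)))

/-! Head/last letter analysis for disjointness. -/

/-- Every word of `S` is nonempty, starts with a letter satisfying `P`, and
ends with a letter satisfying `Q`. -/
def GoodHL (P Q : X ⊕ Bool → Prop) (S : Set (List (X ⊕ Bool))) : Prop :=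
  ∀ w ∈ S, (∃ a, w.head? = some a ∧ P a) ∧ ∃ b, w.getLast? = some b ∧ Q b

def IsInl : X ⊕ Bool → Prop := fun a => ∃ x, a = Sum.inl x

lemma goodHL_letters : GoodHL (IsInl (X := X)) IsInl (lettersS X) := by
  rintro w ⟨x, rfl⟩
  exact ⟨⟨Sum.inl x, rfl, x, rfl⟩, ⟨Sum.inl x, rfl, x, rfl⟩⟩

lemma goodHL_brS (Z : Set (List (X ⊕ Bool))) :
    GoodHL (· = (lb : X ⊕ Bool)) (· = (rb : X ⊕ Bool)) (brS Z) := by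
  rintro w ⟨z, _, rfl⟩
  refine ⟨⟨lb, rfl, rfl⟩, ⟨rb, ?_, rfl⟩⟩
  show (lb :: (z ++ [rb])).getLast? = some rb
  rw [show lb :: (z ++ [rb]) = (lb :: z) ++ [rb] by simp, List.getLast?_concat]

lemma GoodHL.ne_nil {P Q : X ⊕ Bool → Prop} {S : Set (List (X ⊕ Bool))}
    (h : GoodHL P Q S) {w} (hw : w ∈ S) : w ≠ [] := by
  obtain ⟨⟨a, ha, _⟩, _⟩ := h w hw
  intro he; rw [he] at ha; simp at ha

lemma goodHL_catS {P Q P' Q' : X ⊕ Bool → Prop} {Y Z : Set (List (X ⊕ Bool))}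
    (hY : GoodHL P Q Y) (hZ : GoodHL P' Q' Z) : GoodHL P Q' (catS Y Z) := by
  rintro w ⟨y, hy, z, hz, rfl⟩
  obtain ⟨⟨a, ha, hPa⟩, _⟩ := hY y hy
  obtain ⟨_, ⟨b, hb, hQb⟩⟩ := hZ z hz
  refine ⟨⟨a, ?_, hPa⟩, ⟨b, ?_, hQb⟩⟩
  · cases y with
    | nil => exact absurd rfl (hY.ne_nil hy)
    | cons c t => simpa using ha
  · rw [List.getLast?_append_of_ne_nil y (hZ.ne_nil hz), hb]

lemma goodHL_powS {P Q : X ⊕ Bool → Prop} {Y : Set (List (X ⊕ Bool))}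
    (hY : GoodHL P Q Y) : ∀ n, GoodHL P Q (powS Y n)
  | 0 => hY
  | n + 1 => goodHL_catS hY (goodHL_powS hY n)

lemma goodHL_iUnion {P Q : X ⊕ Bool → Prop} {S : ℕ → Set (List (X ⊕ Bool))}
    (h : ∀ n, GoodHL P Q (S n)) : GoodHL P Q (⋃ n, S n) := by
  intro w hw
  obtain ⟨n, hn⟩ := Set.mem_iUnion.1 hw
  exact h n w hn

lemma goodHL_union {P Q : X ⊕ Bool → Prop} {S T : Set (List (X ⊕ Bool))}
    (hS : GoodHL P Q S) (hT : GoodHL P Q T) : GoodHL P Q (S ∪ T) := by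
  rintro w (hw | hw)
  exacts [hS w hw, hT w hw]

lemma disjoint_of_head {P Q P' Q' : X ⊕ Bool → Prop} {S T : Set (List (X ⊕ Bool))}
    (hS : GoodHL P Q S) (hT : GoodHL P' Q' T) (h : ∀ a, P a → P' a → False) :
    Disjoint S T := by
  rw [Set.disjoint_left]
  intro w hwS hwT
  obtain ⟨⟨a, ha, hPa⟩, _⟩ := hS w hwS
  obtain ⟨⟨a', ha', hPa'⟩, _⟩ := hT w hwT
  rw [ha] at ha'
  exact h a hPa (Option.some_injective _ ha' ▸ hPa')

lemma disjoint_of_last {P Q P' Q' : X ⊕ Bool → Prop} {S T : Set (List (X ⊕ Bool))}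
    (hS : GoodHL P Q S) (hT : GoodHL P' Q' T) (h : ∀ b, Q b → Q' b → False) :
    Disjoint S T := by
  rw [Set.disjoint_left]
  intro w hwS hwT
  obtain ⟨_, ⟨b, hb, hQb⟩⟩ := hS w hwS
  obtain ⟨_, ⟨b', hb', hQb'⟩⟩ := hT w hwT
  rw [hb] at hb'
  exact h b hQb (Option.some_injective _ hb' ▸ hQb')

end Aux

/-- `𝔛_∞` is the disjoint union of the four components of `Λ(X, 𝔛_∞)`:
`⋃_{r≥1}(X⌊𝔛_∞⌋)^r`, `⋃_{r≥0}(X⌊𝔛_∞⌋)^r X`, `⋃_{r≥1}(⌊𝔛_∞⌋X)^r`, and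
`⋃_{r≥0}(⌊𝔛_∞⌋X)^r ⌊𝔛_∞⌋`. -/
theorem stmt_9 (X : Type*) :
    frakXinf X =
      (⋃ n, powS (catS (lettersS X) (brS (frakXinf X))) n) ∪
        (lettersS X ∪ ⋃ n, catS (powS (catS (lettersS X) (brS (frakXinf X))) n) (lettersS X)) ∪
        (⋃ n, powS (catS (brS (frakXinf X)) (lettersS X)) n) ∪
        (brS (frakXinf X) ∪
          ⋃ n, catS (powS (catS (brS (frakXinf X)) (lettersS X)) n) (brS (frakXinf X))) ∧
    ([(⋃ n, powS (catS (lettersS X) (brS (frakXinf X))) n),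
      (lettersS X ∪ ⋃ n, catS (powS (catS (lettersS X) (brS (frakXinf X))) n) (lettersS X)),
      (⋃ n, powS (catS (brS (frakXinf X)) (lettersS X)) n),
      (brS (frakXinf X) ∪
        ⋃ n, catS (powS (catS (brS (frakXinf X)) (lettersS X)) n) (brS (frakXinf X)))] :
      List (Set (List (X ⊕ Bool)))).Pairwise Disjoint := by
  constructor
  · exact frakXinf_eq_altS X
  · set L := lettersS X
    set Z := frakXinf X
    have hA : GoodHL (IsInl (X := X)) (· = (rb : X ⊕ Bool))
        (⋃ n, powS (catS L (brS Z)) n) :=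
      goodHL_iUnion fun n => goodHL_powS (goodHL_catS goodHL_letters (goodHL_brS Z)) n
    have hB : GoodHL (IsInl (X := X)) IsInl
        (L ∪ ⋃ n, catS (powS (catS L (brS Z)) n) L) :=
      goodHL_union goodHL_letters (goodHL_iUnion fun n =>
        goodHL_catS (goodHL_powS (goodHL_catS goodHL_letters (goodHL_brS Z)) n) goodHL_letters)
    have hC : GoodHL (· = (lb : X ⊕ Bool)) IsInl
        (⋃ n, powS (catS (brS Z) L) n) :=
      goodHL_iUnion fun n => goodHL_powS (goodHL_catS (goodHL_brS Z) goodHL_letters) n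
    have hD : GoodHL (· = (lb : X ⊕ Bool)) (· = (rb : X ⊕ Bool))
        (brS Z ∪ ⋃ n, catS (powS (catS (brS Z) L) n) (brS Z)) :=
      goodHL_union (goodHL_brS Z) (goodHL_iUnion fun n =>
        goodHL_catS (goodHL_powS (goodHL_catS (goodHL_brS Z) goodHL_letters) n) (goodHL_brS Z))
    have hIR : ∀ a : X ⊕ Bool, IsInl a → a = rb → False := by
      rintro a ⟨x, rfl⟩ h; simp [rb] at h
    have hIL : ∀ a : X ⊕ Bool, IsInl a → a = lb → False := by
      rintro a ⟨x, rfl⟩ h; simp [lb] at h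
    refine List.Pairwise.cons ?_ (List.Pairwise.cons ?_
      (List.Pairwise.cons ?_ (List.pairwise_singleton _ _)))
    · intro S hS
      simp only [List.mem_cons, List.mem_singleton, List.not_mem_nil, or_false] at hS
      rcases hS with rfl | rfl | rfl
      · exact disjoint_of_last hA hB fun b h1 h2 => hIR b h2 h1
      · exact disjoint_of_head hA hC fun a h1 h2 => hIL a h1 h2
      · exact disjoint_of_head hA hD fun a h1 h2 => hIL a h1 h2
    · intro S hS
      simp only [List.mem_cons, List.mem_singleton, List.not_mem_nil, or_false] at hS
      rcases hS with rfl | rfl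
      · exact disjoint_of_head hB hC fun a h1 h2 => hIL a h1 h2
      · exact disjoint_of_head hB hD fun a h1 h2 => hIL a h1 h2
    · intro S hS
      simp only [List.mem_singleton] at hS
      subst hS
      exact disjoint_of_last hC hD fun b h1 h2 => hIR b h1 h2
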